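/- For every positive integer ℓ there exists a set function on a finite set that is ℓ-alternating but not (ℓ+1)-alternating; namely on a finite set J with |J| > ℓ, fixing X ⊆ J with |X| = ℓ+1, the function ψ = Σ_{∅ ≠ A ⊆ J, |A| ≤ ℓ} φ_A − φ_X is ℓ-alternating but not (ℓ+1)-alternating. -/

import Mathlib

noncomputable def altSum {J : Type*} (φ : Set J → ℝ) (A₀ : Set J) {k : ℕ}
    (A : Fin k → Set J) : ℝ :=
  ∑ K : Finset (Fin k), (-1 : ℝ) ^ K.card * φ (A₀ ∪ ⋃ i ∈ K, A i)

/-- `φ` is `k`-alternating (on the full power set of a finite set). -/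
def KAlt {J : Type*} (φ : Set J → ℝ) (k : ℕ) : Prop :=
  φ ∅ = 0 ∧ ∀ (A₀ : Set J) (A : Fin k → Set J), altSum φ A₀ A ≤ 0

open Classical in
/-- `φ_A`: the indicator of intersecting `A`. -/
noncomputable def phiA {J : Type*} (A : Set J) (X : Set J) : ℝ :=
  if (X ∩ A).Nonempty then 1 else 0

/-- `ψ = Σ_{∅ ≠ A ⊆ J, |A| ≤ ℓ} φ_A − φ_X`. -/
noncomputable def psi8 {J : Type*} [Fintype J] [DecidableEq J]
    (ℓ : ℕ) (X : Finset J) (Y : Set J) : ℝ :=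
  (∑ A ∈ Finset.univ.powerset.filter
      (fun A : Finset J => A.Nonempty ∧ A.card ≤ ℓ), phiA (↑A : Set J) Y) -
    phiA (↑X : Set J) Y

/-- On a finite set `J` with `|J| > ℓ` and `X ⊆ J` of size `ℓ + 1`, the function
`ψ = Σ_{∅ ≠ A ⊆ J, |A| ≤ ℓ} φ_A − φ_X` is `ℓ`-alternating but not
`(ℓ+1)`-alternating. -/

lemma sum_pow_real {α : Type*} [DecidableEq α] (x : Finset α) :
    (∑ m ∈ x.powerset, (-1 : ℝ) ^ m.card) = if x = ∅ then 1 else 0 := by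
  have h := Finset.sum_powerset_neg_one_pow_card (x := x)
  split_ifs with hx
  · rw [hx] at h ⊢; exact_mod_cast h
  · rw [if_neg hx] at h; exact_mod_cast h

open Classical in
lemma altSum_lemma {J : Type*} (A : Set J) (A₀ : Set J) {k : ℕ} (hk : 0 < k)
    (B : Fin k → Set J) :
    (∑ K : Finset (Fin k), (-1 : ℝ) ^ K.card *
      (if ((A₀ ∪ ⋃ i ∈ K, B i) ∩ A).Nonempty then (1:ℝ) else 0)) =
    if (A₀ ∩ A).Nonempty then 0
    else if ∀ i, (B i ∩ A).Nonempty then -1 else 0 := by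
  classical
  by_cases h0 : (A₀ ∩ A).Nonempty
  · rw [if_pos h0]
    have : ∀ K : Finset (Fin k), ((A₀ ∪ ⋃ i ∈ K, B i) ∩ A).Nonempty := by
      intro K; exact h0.mono (Set.inter_subset_inter_left _ Set.subset_union_left)
    have heq : (∑ K : Finset (Fin k), (-1 : ℝ) ^ K.card *
        (if ((A₀ ∪ ⋃ i ∈ K, B i) ∩ A).Nonempty then (1:ℝ) else 0))
        = ∑ K : Finset (Fin k), (-1 : ℝ) ^ K.card :=
      Finset.sum_congr rfl (fun K _ => by rw [if_pos (this K), mul_one])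
    rw [heq]
    have := sum_pow_real (Finset.univ : Finset (Fin k))
    rw [Finset.powerset_univ] at this
    rw [this, if_neg (by simp [Finset.univ_eq_empty_iff, Fin.pos_iff_nonempty.mp hk])]
  · rw [if_neg h0]
    set S : Finset (Fin k) := Finset.univ.filter (fun i => (B i ∩ A).Nonempty) with hS
    have key : ∀ K : Finset (Fin k),
        ((A₀ ∪ ⋃ i ∈ K, B i) ∩ A).Nonempty ↔ ¬ (K ⊆ Sᶜ) := by
      intro K
      constructor
      · rintro ⟨x, hx1, hx2⟩ hsub
        rcases hx1 with hx1 | hx1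
        · exact h0 ⟨x, hx1, hx2⟩
        · simp only [Set.mem_iUnion] at hx1
          obtain ⟨i, hiK, hxi⟩ := hx1
          have hiS : i ∈ S := Finset.mem_filter.2 ⟨Finset.mem_univ i, ⟨x, hxi, hx2⟩⟩
          have := hsub hiK
          rw [Finset.mem_compl] at this
          exact this hiS
      · intro hns
        rw [Finset.not_subset] at hns
        obtain ⟨i, hiK, hi⟩ := hns
        simp only [Finset.mem_compl, not_not] at hi
        have hi' : (B i ∩ A).Nonempty := by simpa [hS] using hi
        obtain ⟨x, hx1, hx2⟩ := hi'
        exact ⟨x, Or.inr (Set.mem_iUnion₂.2 ⟨i, hiK, hx1⟩), hx2⟩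
    have step : ∀ K : Finset (Fin k),
        (-1 : ℝ) ^ K.card * (if ((A₀ ∪ ⋃ i ∈ K, B i) ∩ A).Nonempty then (1:ℝ) else 0)
        = (-1 : ℝ) ^ K.card - (if K ⊆ Sᶜ then (-1 : ℝ) ^ K.card else 0) := by
      intro K
      by_cases hK : K ⊆ Sᶜ
      · rw [if_pos hK, if_neg (by rw [key]; simpa using hK)]; ring
      · rw [if_neg hK, if_pos ((key K).2 hK)]; ring
    simp only [step]
    rw [Finset.sum_sub_distrib]
    have h1 : (∑ K : Finset (Fin k), (-1 : ℝ) ^ K.card) = 0 := by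
      have := sum_pow_real (Finset.univ : Finset (Fin k))
      rw [Finset.powerset_univ] at this
      rw [this, if_neg (by simp [Finset.univ_eq_empty_iff, Fin.pos_iff_nonempty.mp hk])]
    have h2 : (∑ K : Finset (Fin k), (if K ⊆ Sᶜ then (-1 : ℝ) ^ K.card else 0))
        = ∑ K ∈ (Sᶜ).powerset, (-1 : ℝ) ^ K.card := by
      rw [← Finset.sum_filter]
      congr 1
      ext K; simp [Finset.mem_powerset]
    rw [h1, h2, sum_pow_real, zero_sub]
    by_cases hall : ∀ i, (B i ∩ A).Nonempty
    · rw [if_pos hall, if_pos]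
      rw [Finset.compl_eq_empty_iff, hS, Finset.eq_univ_iff_forall]
      intro i; simp [hall i]
    · rw [if_neg hall, if_neg, neg_zero]
      rw [Finset.compl_eq_empty_iff, hS, Finset.eq_univ_iff_forall]
      intro h; apply hall; intro i
      simpa using h i


open Classical in
lemma altSum_phiA {J : Type*} (A : Set J) (A₀ : Set J) {k : ℕ} (hk : 0 < k)
    (B : Fin k → Set J) :
    altSum (phiA A) A₀ B =
    if (A₀ ∩ A).Nonempty then 0
    else if ∀ i, (B i ∩ A).Nonempty then -1 else 0 := by
  rw [← altSum_lemma A A₀ hk B]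
  unfold altSum phiA
  apply Finset.sum_congr rfl
  intro K _
  congr 1

lemma altSum_psi8 {J : Type*} [Fintype J] [DecidableEq J] (ℓ : ℕ) (X : Finset J)
    (A₀ : Set J) {k : ℕ} (B : Fin k → Set J) :
    altSum (psi8 ℓ X) A₀ B =
    (∑ A ∈ Finset.univ.powerset.filter
        (fun A : Finset J => A.Nonempty ∧ A.card ≤ ℓ),
        altSum (phiA (↑A : Set J)) A₀ B)
      - altSum (phiA (↑X : Set J)) A₀ B := by
  unfold psi8 altSum
  simp only [mul_sub, Finset.mul_sum]
  rw [Finset.sum_sub_distrib, Finset.sum_comm]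

theorem stmt8 {J : Type*} [Fintype J] [DecidableEq J] (ℓ : ℕ) (hℓ : 1 ≤ ℓ)
    (hJ : ℓ < Fintype.card J) (X : Finset J) (hX : X.card = ℓ + 1) :
    KAlt (psi8 ℓ X) ℓ ∧ ¬ KAlt (psi8 ℓ X) (ℓ + 1)  := by
  classical
  constructor
  · constructor
    · simp [psi8, phiA, Set.empty_inter]
    · intro A₀ B
      rw [altSum_psi8]
      set s := Finset.univ.powerset.filter
        (fun A : Finset J => A.Nonempty ∧ A.card ≤ ℓ) with hs
      have hpos : 0 < ℓ := hℓ
      have hterm : ∀ A ∈ s, altSum (phiA (↑A : Set J)) A₀ B ≤ 0 := by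
        intro A _
        rw [altSum_phiA _ _ hpos]
        split_ifs <;> norm_num
      by_cases hX0 : altSum (phiA (↑X : Set J)) A₀ B = 0
      · rw [hX0, sub_zero]
        exact Finset.sum_nonpos hterm
      · -- then altSum (phiA X) = -1 with the two conditions holding
        rw [altSum_phiA _ _ hpos] at hX0 ⊢
        by_cases h1 : (A₀ ∩ (↑X : Set J)).Nonempty
        · rw [if_pos h1] at hX0; exact absurd rfl hX0
        rw [if_neg h1] at hX0 ⊢
        by_cases h2 : ∀ i, (B i ∩ (↑X : Set J)).Nonempty
        swap
        · rw [if_neg h2] at hX0; exact absurd rfl hX0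
        rw [if_pos h2]
        -- construct witness A* ⊆ X
        choose x hx1 hx2 using h2
        set A' : Finset J := Finset.image x Finset.univ with hA'
        have hA's : A' ∈ s := by
          rw [hs, Finset.mem_filter]
          refine ⟨Finset.mem_powerset.2 (Finset.subset_univ _), ?_, ?_⟩
          · exact ⟨x ⟨0, hpos⟩, Finset.mem_image_of_mem x (Finset.mem_univ _)⟩
          · calc A'.card ≤ Finset.univ.card := Finset.card_image_le
              _ = ℓ := Finset.card_univ.trans (Fintype.card_fin ℓ)
        have hA'X : (↑A' : Set J) ⊆ (↑X : Set J) := by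
          intro y hy
          simp only [hA', Finset.coe_image, Set.mem_image] at hy
          obtain ⟨i, _, rfl⟩ := hy
          exact hx2 i
        have hval : altSum (phiA (↑A' : Set J)) A₀ B = -1 := by
          rw [altSum_phiA _ _ hpos, if_neg, if_pos]
          · intro i
            exact ⟨x i, hx1 i, by simp [hA']⟩
          · intro ⟨y, hy1, hy2⟩
            exact h1 ⟨y, hy1, hA'X hy2⟩
        have hsplit : ∑ A ∈ s, altSum (phiA (↑A : Set J)) A₀ B
            = altSum (phiA (↑A' : Set J)) A₀ B
              + ∑ A ∈ s.erase A', altSum (phiA (↑A : Set J)) A₀ B :=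
          (Finset.add_sum_erase s _ hA's).symm
        rw [hsplit, hval]
        have : ∑ A ∈ s.erase A', altSum (phiA (↑A : Set J)) A₀ B ≤ 0 :=
          Finset.sum_nonpos (fun A hA => hterm A (Finset.mem_of_mem_erase hA))
        linarith
  · intro ⟨_, halt⟩
    -- choose an enumeration of X
    have hcard : Fintype.card {a // a ∈ X} = ℓ + 1 := by
      rw [Fintype.card_coe, hX]
    let e : Fin (ℓ + 1) ≃ {a // a ∈ X} := (Fintype.equivFinOfCardEq hcard).symm
    set B : Fin (ℓ + 1) → Set J := fun i => {(e i : J)} with hB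
    have hBX : ∀ i, (B i ∩ (↑X : Set J)).Nonempty := by
      intro i
      exact ⟨(e i : J), rfl, (e i).2⟩
    have hXval : altSum (phiA (↑X : Set J)) (∅ : Set J) B = -1 := by
      rw [altSum_phiA _ _ (Nat.succ_pos ℓ), if_neg (by simp), if_pos hBX]
    have hAval : ∀ A ∈ Finset.univ.powerset.filter
        (fun A : Finset J => A.Nonempty ∧ A.card ≤ ℓ),
        altSum (phiA (↑A : Set J)) (∅ : Set J) B = 0 := by
      intro A hA
      rw [Finset.mem_filter] at hA
      obtain ⟨_, _, hAcard⟩ := hA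
      rw [altSum_phiA _ _ (Nat.succ_pos ℓ), if_neg (by simp), if_neg]
      intro hall
      -- all e i ∈ A, giving card A ≥ ℓ + 1
      have hsub : ∀ i : Fin (ℓ + 1), (e i : J) ∈ A := by
        intro i
        obtain ⟨y, hy1, hy2⟩ := hall i
        rw [hB] at hy1
        simp only [Set.mem_singleton_iff] at hy1
        subst hy1
        exact hy2
      have hinj : Function.Injective (fun i : Fin (ℓ + 1) => (e i : J)) := by
        intro i j hij
        exact e.injective (Subtype.ext hij)
      have : ℓ + 1 ≤ A.card := by
        have h := Finset.card_le_card_of_injOn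
          (s := (Finset.univ : Finset (Fin (ℓ + 1)))) (t := A)
          (f := fun i : Fin (ℓ + 1) => (e i : J))
          (fun i _ => hsub i) hinj.injOn
        simpa using h
      omega
    have := halt ∅ B
    rw [altSum_psi8, Finset.sum_congr rfl hAval, Finset.sum_const, hXval] at this
    norm_num at this
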